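/- arXiv:2506.21948 — 4 statements merged into one kernel-verified Lean document; each statement's English description precedes it below -/
import Mathlib

section
/- (Case 1 of the correctness of SHRINK.) Suppose s ∉ 𝒮(Δ), the shrinking set 𝒢 is nonempty and proper, v_i(s) = u for all i ∈ 𝒢, and v_i(s) > v_j(s) for all i ∈ 𝒢 and j ∉ 𝒢. Let p̂ ∉ 𝒢 attain the maximum of t_j over j ∉ 𝒢, and assume u²Δ_{p̂}² > u²·‖s^{𝓘_{p̂}∖𝓘_𝒢}‖₂² + ‖s^{𝓘_{p̂}∩𝓘_𝒢}‖₂². Then t_* = 1/u, and the output s_* satisfies v_i(s_*) = 1 for every i ∈ 𝒢 and v_i(s_*) ≤ 1 for every i ∉ 𝒢; in particular s_* ∈ 𝒮(Δ). -/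
/-- Coordinate projection: `(proj I x) j = x j` if `j ∈ I`, else `0`. -/
noncomputable def proj {n : ℕ} (I : Finset (Fin n)) (x : EuclideanSpace ℝ (Fin n)) :
    EuclideanSpace ℝ (Fin n) :=
  WithLp.toLp 2 (fun j => if j ∈ I then x j else 0)

lemma proj_normsq {n : ℕ} (I : Finset (Fin n)) (x : EuclideanSpace ℝ (Fin n)) :
    ‖proj I x‖ ^ 2 = ∑ j ∈ I, (x j) ^ 2 := by
  rw [EuclideanSpace.norm_eq, Real.sq_sqrt (by positivity)]
  have : ∀ j, ‖(proj I x) j‖ ^ 2 = if j ∈ I then (x j)^2 else 0 := by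
    intro j; simp only [proj, PiLp.toLp_apply]; split <;> simp [sq_abs]
  rw [Finset.sum_congr rfl fun j _ => this j, Finset.sum_ite_mem, Finset.univ_inter]

/-- Case 1 of the correctness of the SHRINK subroutine: if
`u²Δ_p̂² > u²‖s^{I_p̂∖I_G}‖² + ‖s^{I_p̂∩I_G}‖²` for a maximizer `p̂ ∉ 𝒢` of the
elemental ratios, then `t_* = 1/u` and the output `s_*` satisfies `v_i(s_*) = 1`
on `𝒢`, `v_i(s_*) ≤ 1` off `𝒢`; in particular `s_* ∈ 𝒮(Δ)`. -/
theorem shrink_case_one {n q : ℕ} (I : Fin q → Finset (Fin n)) (Δ : Fin q → ℝ)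
    (hΔ : ∀ i, 0 < Δ i) (s : EuclideanSpace ℝ (Fin n)) (u : ℝ)
    (𝒢 : Finset (Fin q)) (h𝒢ne : 𝒢.Nonempty) (h𝒢pr : 𝒢 ≠ Finset.univ)
    (hsout : ¬ (∀ i, ‖proj (I i) s‖ ≤ Δ i))
    (hvG : ∀ i ∈ 𝒢, ‖proj (I i) s‖ / Δ i = u)
    (hvlt : ∀ i ∈ 𝒢, ∀ j ∉ 𝒢, ‖proj (I j) s‖ / Δ j < ‖proj (I i) s‖ / Δ i)
    (IG : Finset (Fin n)) (hIG : IG = 𝒢.biUnion I)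
    (tf : Fin q → ℝ)
    (htf : ∀ i, tf i = if i ∈ 𝒢 then 1 / u
      else max (1 / u)
        (‖proj (I i \ IG) s‖ / Real.sqrt (u ^ 2 * Δ i ^ 2 - ‖proj (I i ∩ IG) s‖ ^ 2)))
    (phat : Fin q) (hphat : phat ∉ 𝒢)
    (hphatmax : ∀ j ∉ 𝒢, tf j ≤ tf phat)
    (hcase : u ^ 2 * ‖proj (I phat \ IG) s‖ ^ 2 + ‖proj (I phat ∩ IG) s‖ ^ 2
      < u ^ 2 * Δ phat ^ 2)
    (tstar : ℝ)
    (htstar : tstar = Finset.univ.sup' (Finset.univ_nonempty_iff.mpr ⟨phat⟩) tf)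
    (sstar : EuclideanSpace ℝ (Fin n))
    (hsstar : sstar = s + (tstar - 1) • proj IG s) :
    tstar = 1 / u ∧
    (∀ i ∈ 𝒢, ‖proj (I i) sstar‖ / Δ i = 1) ∧
    (∀ i ∉ 𝒢, ‖proj (I i) sstar‖ / Δ i ≤ 1) ∧
    (∀ i, ‖proj (I i) sstar‖ ≤ Δ i) := by
  obtain ⟨g, hg⟩ := h𝒢ne
  have hu1 : 1 < u := by
    push_neg at hsout
    obtain ⟨i0, hi0⟩ := hsout
    have h1 : 1 < ‖proj (I i0) s‖ / Δ i0 := (one_lt_div (hΔ i0)).2 hi0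
    by_cases h : i0 ∈ 𝒢
    · rwa [hvG i0 h] at h1
    · have h2 := hvlt g hg i0 h
      rw [hvG g hg] at h2
      linarith
  have hu0 : 0 < u := by linarith
  have htfle : ∀ i, tf i ≤ 1 / u := by
    intro i
    by_cases h : i ∈ 𝒢
    · rw [htf i, if_pos h]
    · refine (hphatmax i h).trans ?_
      rw [htf phat, if_neg hphat]
      apply max_le le_rfl
      set a := ‖proj (I phat \ IG) s‖ with ha'
      set b := ‖proj (I phat ∩ IG) s‖ with hb'
      have ha : 0 ≤ a := norm_nonneg _
      have hD : u ^ 2 * a ^ 2 < u ^ 2 * Δ phat ^ 2 - b ^ 2 := by linarith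
      have hDpos : 0 < u ^ 2 * Δ phat ^ 2 - b ^ 2 := lt_of_le_of_lt (by positivity) hD
      have hsq : 0 < Real.sqrt (u ^ 2 * Δ phat ^ 2 - b ^ 2) := Real.sqrt_pos.2 hDpos
      rw [div_le_div_iff₀ hsq hu0, one_mul]
      have h3 : a * u ≤ Real.sqrt (u ^ 2 * Δ phat ^ 2 - b ^ 2) := by
        rw [show a * u = Real.sqrt ((a * u) ^ 2) from (Real.sqrt_sq (by positivity)).symm]
        apply Real.sqrt_le_sqrt; nlinarith
      exact h3
  have hts : tstar = 1 / u := by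
    rw [htstar]
    apply le_antisymm
    · exact Finset.sup'_le _ _ fun i _ => htfle i
    · have hgeq : tf g = 1 / u := by rw [htf g, if_pos hg]
      calc 1 / u = tf g := hgeq.symm
        _ ≤ _ := Finset.le_sup' tf (Finset.mem_univ g)
  have hpt : ∀ j, sstar j = if j ∈ IG then (1 / u) * s j else s j := by
    intro j
    rw [hsstar, hts]
    simp only [PiLp.add_apply, PiLp.smul_apply, proj, smul_eq_mul, PiLp.toLp_apply]
    split <;> ring
  have hGcase : ∀ i ∈ 𝒢, ‖proj (I i) sstar‖ = Δ i := by
    intro i hi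
    have hsub : ∀ j ∈ I i, j ∈ IG := fun j hj => hIG ▸ Finset.mem_biUnion.2 ⟨i, hi, hj⟩
    have heq : proj (I i) sstar = (1 / u) • proj (I i) s := by
      ext j
      simp only [proj, PiLp.smul_apply, smul_eq_mul, PiLp.toLp_apply]
      by_cases hj : j ∈ I i
      · rw [if_pos hj, if_pos hj, hpt j, if_pos (hsub j hj)]
      · rw [if_neg hj, if_neg hj, mul_zero]
    have hns : ‖proj (I i) s‖ = u * Δ i := by
      have h4 := hvG i hi
      rw [div_eq_iff (hΔ i).ne'] at h4
      linarith
    rw [heq, norm_smul, hns, Real.norm_eq_abs, abs_of_pos (by positivity)]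
    field_simp
  have hNcase : ∀ i ∉ 𝒢, ‖proj (I i) sstar‖ ≤ Δ i := by
    intro i hi
    set a := ‖proj (I i \ IG) s‖ with ha'
    set b := ‖proj (I i ∩ IG) s‖ with hb'
    have hbn : 0 ≤ b := norm_nonneg _
    have han : 0 ≤ a := norm_nonneg _
    have hble : b ^ 2 ≤ ‖proj (I i) s‖ ^ 2 := by
      rw [hb', proj_normsq, proj_normsq]
      exact Finset.sum_le_sum_of_subset_of_nonneg Finset.inter_subset_left
        (by intros; positivity)
    have hlt : ‖proj (I i) s‖ < u * Δ i := by
      have h2 := hvlt g hg i hi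
      rw [hvG g hg] at h2
      exact (div_lt_iff₀ (hΔ i)).1 h2
    have hDpos : 0 < u ^ 2 * Δ i ^ 2 - b ^ 2 := by nlinarith [norm_nonneg (proj (I i) s)]
    have hA : a / Real.sqrt (u ^ 2 * Δ i ^ 2 - b ^ 2) ≤ 1 / u := by
      have h5 := htfle i
      rw [htf i, if_neg hi] at h5
      exact le_trans (le_max_right _ _) h5
    have key : u ^ 2 * a ^ 2 ≤ u ^ 2 * Δ i ^ 2 - b ^ 2 := by
      have hsq : 0 < Real.sqrt (u ^ 2 * Δ i ^ 2 - b ^ 2) := Real.sqrt_pos.2 hDpos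
      rw [div_le_div_iff₀ hsq hu0, one_mul] at hA
      have h6 := Real.sq_sqrt hDpos.le
      have h7 := mul_le_mul hA hA (by positivity) hsq.le
      nlinarith [h7, h6]
    have hsplit : ‖proj (I i) sstar‖ ^ 2 = (1 / u) ^ 2 * b ^ 2 + a ^ 2 := by
      rw [proj_normsq, hb', ha', proj_normsq, proj_normsq, Finset.mul_sum,
        ← Finset.sum_filter_add_sum_filter_not (I i) (· ∈ IG)]
      congr 1
      · rw [Finset.filter_mem_eq_inter] at *
        apply Finset.sum_congr rfl
        intro j hj
        rw [hpt j, if_pos (Finset.mem_inter.1 hj).2]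
        ring
      · rw [show (I i).filter (fun j => ¬ j ∈ IG) = I i \ IG from (Finset.sdiff_eq_filter _ _).symm]
        apply Finset.sum_congr rfl
        intro j hj
        rw [hpt j, if_neg (Finset.mem_sdiff.1 hj).2]
    have hle2 : ‖proj (I i) sstar‖ ^ 2 ≤ Δ i ^ 2 := by
      rw [hsplit]
      have hu2 : (0:ℝ) < u ^ 2 := by positivity
      have h3 : (1 / u) ^ 2 * b ^ 2 + a ^ 2 = (u ^ 2 * a ^ 2 + b ^ 2) / u ^ 2 := by
        field_simp; ring
      rw [h3, div_le_iff₀ hu2]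
      nlinarith [key]
    have h8 := Real.sqrt_le_sqrt hle2
    rwa [Real.sqrt_sq (norm_nonneg _), Real.sqrt_sq (hΔ i).le] at h8
  refine ⟨hts, fun i hi => by rw [hGcase i hi, div_self (hΔ i).ne'], 
    fun i hi => (div_le_one (hΔ i)).2 (hNcase i hi), fun i => ?_⟩
  by_cases h : i ∈ 𝒢
  · exact (hGcase i h).le
  · exact hNcase i h
end

section
/- (Theorem 2.1, correctness of the SHRINK subroutine.) Suppose s ∉ 𝒮(Δ), the shrinking set 𝒢 is nonempty and proper, v_i(s) = u for all i ∈ 𝒢, and v_i(s) > v_j(s) for all i ∈ 𝒢 and j ∉ 𝒢. Then the output s_* satisfies one of the following two alternatives: either (i) v_i(s_*) = 1 for every i ∈ 𝒢 and v_i(s_*) ≤ 1 for every i ∉ 𝒢; or (ii) there exists p̂ ∉ 𝒢 such that v_i(s_*) = v_{p̂}(s_*) for every i ∈ 𝒢 and v_i(s_*) ≤ v_{p̂}(s_*) for every i ∉ 𝒢 with i ≠ p̂. -/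
lemma sq_le_norm_aux {a b : ℝ} (ha : 0 ≤ a) (hb : 0 ≤ b) (h : a^2 ≤ b^2) : a ≤ b := by
  have := Real.sqrt_le_sqrt h
  rwa [Real.sqrt_sq ha, Real.sqrt_sq hb] at this

lemma sq_eq_norm_aux {a b : ℝ} (ha : 0 ≤ a) (hb : 0 ≤ b) (h : a^2 = b^2) : a = b := by
  have := congrArg Real.sqrt h
  rwa [Real.sqrt_sq ha, Real.sqrt_sq hb] at this

lemma proj_mono {n : ℕ} {J K : Finset (Fin n)} (h : J ⊆ K) (x : EuclideanSpace ℝ (Fin n)) :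
    ‖proj J x‖ ≤ ‖proj K x‖ := by
  refine sq_le_norm_aux (norm_nonneg _) (norm_nonneg _) ?_
  rw [proj_normsq, proj_normsq]
  exact Finset.sum_le_sum_of_subset_of_nonneg h (fun i _ _ => by positivity)

/-- Theorem 2.1 (correctness of the SHRINK subroutine): the output `s_*` either has
violation ratio `1` on `𝒢` and `≤ 1` elsewhere, or there is `p̂ ∉ 𝒢` whose
violation ratio at `s_*` equals that of every element of `𝒢` and dominates all
the other elements. -/
theorem shrink_correct {n q : ℕ} (I : Fin q → Finset (Fin n)) (Δ : Fin q → ℝ)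
    (hΔ : ∀ i, 0 < Δ i) (s : EuclideanSpace ℝ (Fin n)) (u : ℝ)
    (𝒢 : Finset (Fin q)) (h𝒢ne : 𝒢.Nonempty) (h𝒢pr : 𝒢 ≠ Finset.univ)
    (hsout : ¬ (∀ i, ‖proj (I i) s‖ ≤ Δ i))
    (hvG : ∀ i ∈ 𝒢, ‖proj (I i) s‖ / Δ i = u)
    (hvlt : ∀ i ∈ 𝒢, ∀ j ∉ 𝒢, ‖proj (I j) s‖ / Δ j < ‖proj (I i) s‖ / Δ i)
    (IG : Finset (Fin n)) (hIG : IG = 𝒢.biUnion I)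
    (tf : Fin q → ℝ)
    (htf : ∀ i, tf i = if i ∈ 𝒢 then 1 / u
      else max (1 / u)
        (‖proj (I i \ IG) s‖ / Real.sqrt (u ^ 2 * Δ i ^ 2 - ‖proj (I i ∩ IG) s‖ ^ 2)))
    (tstar : ℝ)
    (htstar : tstar = Finset.univ.sup' (h𝒢ne.mono (Finset.subset_univ 𝒢)) tf)
    (sstar : EuclideanSpace ℝ (Fin n))
    (hsstar : sstar = s + (tstar - 1) • proj IG s) :
    ((∀ i ∈ 𝒢, ‖proj (I i) sstar‖ / Δ i = 1) ∧
      (∀ i ∉ 𝒢, ‖proj (I i) sstar‖ / Δ i ≤ 1)) ∨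
    (∃ phat, phat ∉ 𝒢 ∧
      (∀ i ∈ 𝒢, ‖proj (I i) sstar‖ / Δ i = ‖proj (I phat) sstar‖ / Δ phat) ∧
      (∀ i, i ∉ 𝒢 → i ≠ phat →
        ‖proj (I i) sstar‖ / Δ i ≤ ‖proj (I phat) sstar‖ / Δ phat)) := by
  obtain ⟨g, hg⟩ := id h𝒢ne
  push_neg at hsout
  obtain ⟨i0, hi0⟩ := hsout
  -- u > 1
  have hu1 : 1 < u := by
    by_cases h : i0 ∈ 𝒢
    · have h2 := hvG i0 h
      rw [← h2, lt_div_iff₀ (hΔ i0)]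
      linarith
    · have h1 := hvlt g hg i0 h
      rw [hvG g hg] at h1
      have h2 : 1 < ‖proj (I i0) s‖ / Δ i0 := by
        rw [lt_div_iff₀ (hΔ i0)]; linarith
      linarith
  have hu0 : 0 < u := by linarith
  -- norm of s over I j for j outside 𝒢
  have hAlt : ∀ j ∉ 𝒢, ‖proj (I j) s‖ < u * Δ j := by
    intro j hj
    have h1 := hvlt g hg j hj
    rw [hvG g hg, div_lt_iff₀ (hΔ j)] at h1
    linarith [h1]
  -- positivity of the radicand
  have hD : ∀ j ∉ 𝒢, 0 < u ^ 2 * Δ j ^ 2 - ‖proj (I j ∩ IG) s‖ ^ 2 := by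
    intro j hj
    have h1 : ‖proj (I j ∩ IG) s‖ ≤ ‖proj (I j) s‖ :=
      proj_mono (Finset.inter_subset_left) s
    have h2 : ‖proj (I j ∩ IG) s‖ < u * Δ j := lt_of_le_of_lt h1 (hAlt j hj)
    have h3 : ‖proj (I j ∩ IG) s‖ ^ 2 < (u * Δ j) ^ 2 :=
      pow_lt_pow_left₀ h2 (norm_nonneg _) two_ne_zero
    nlinarith [h3]
  -- tstar ≥ 1/u > 0
  have htstar_ge : 1 / u ≤ tstar := by
    have h1 : tf g ≤ tstar := htstar ▸ Finset.le_sup' tf (Finset.mem_univ g)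
    rw [htf g, if_pos hg] at h1
    exact h1
  have ht0 : 0 < tstar := lt_of_lt_of_le (by positivity) htstar_ge
  have hIsub : ∀ i ∈ 𝒢, I i ⊆ IG := by
    intro i hi
    rw [hIG]
    exact Finset.subset_biUnion_of_mem I hi
  -- pointwise formula for sstar
  have hss : ∀ j, sstar j = if j ∈ IG then tstar * s j else s j := by
    intro j
    rw [hsstar]
    simp only [PiLp.add_apply, PiLp.smul_apply, proj, PiLp.toLp_apply, smul_eq_mul]
    split <;> ring
  -- key decomposition
  have hkey : ∀ i, ‖proj (I i) sstar‖ ^ 2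
      = tstar ^ 2 * ‖proj (I i ∩ IG) s‖ ^ 2 + ‖proj (I i \ IG) s‖ ^ 2 := by
    intro i
    rw [proj_normsq, proj_normsq, proj_normsq, Finset.mul_sum,
      ← Finset.sum_inter_add_sum_sdiff (I i) IG (fun j => (sstar j) ^ 2)]
    congr 1
    · refine Finset.sum_congr rfl (fun j hj => ?_)
      rw [hss j, if_pos (Finset.mem_inter.mp hj).2]
      ring
    · refine Finset.sum_congr rfl (fun j hj => ?_)
      rw [hss j, if_neg (Finset.mem_sdiff.mp hj).2]
  -- norm of sstar on 𝒢 elements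
  have hG_norm : ∀ i ∈ 𝒢, ‖proj (I i) sstar‖ = tstar * u * Δ i := by
    intro i hi
    have h1 : I i ∩ IG = I i := Finset.inter_eq_left.mpr (hIsub i hi)
    have h2 : I i \ IG = ∅ := Finset.sdiff_eq_empty_iff_subset.mpr (hIsub i hi)
    have hns : ‖proj (I i) s‖ = u * Δ i := by
      have h := hvG i hi
      rwa [div_eq_iff (hΔ i).ne'] at h
    refine sq_eq_norm_aux (norm_nonneg _)
      (mul_nonneg (mul_nonneg ht0.le hu0.le) (hΔ i).le) ?_
    rw [hkey i, h1, h2, hns]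
    have : ‖proj (∅ : Finset (Fin n)) s‖ ^ 2 = 0 := by
      rw [proj_normsq]; simp
    rw [this]
    ring
  -- bound for elements outside 𝒢
  have hbound : ∀ j ∉ 𝒢, ‖proj (I j) sstar‖ ≤ tstar * u * Δ j := by
    intro j hj
    have hle : tf j ≤ tstar := htstar ▸ Finset.le_sup' tf (Finset.mem_univ j)
    rw [htf j, if_neg hj] at hle
    have hr : ‖proj (I j \ IG) s‖ / Real.sqrt (u ^ 2 * Δ j ^ 2 - ‖proj (I j ∩ IG) s‖ ^ 2)
        ≤ tstar := le_trans (le_max_right _ _) hle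
    have hDj := hD j hj
    have hsq : 0 < Real.sqrt (u ^ 2 * Δ j ^ 2 - ‖proj (I j ∩ IG) s‖ ^ 2) :=
      Real.sqrt_pos.mpr hDj
    rw [div_le_iff₀ hsq] at hr
    have hB2 : ‖proj (I j \ IG) s‖ ^ 2
        ≤ tstar ^ 2 * (u ^ 2 * Δ j ^ 2 - ‖proj (I j ∩ IG) s‖ ^ 2) := by
      have h1 := pow_le_pow_left₀ (norm_nonneg _) hr 2
      rwa [mul_pow, Real.sq_sqrt hDj.le] at h1
    refine sq_le_norm_aux (norm_nonneg _)
      (mul_nonneg (mul_nonneg ht0.le hu0.le) (hΔ j).le) ?_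
    rw [hkey j]
    nlinarith [hB2]
  by_cases hcase : tstar = 1 / u
  · -- alternative (i)
    left
    constructor
    · intro i hi
      rw [hG_norm i hi, hcase, one_div, inv_mul_cancel₀ hu0.ne', one_mul,
        div_self (hΔ i).ne']
    · intro j hj
      rw [div_le_one (hΔ j)]
      have := hbound j hj
      rw [hcase] at this
      calc ‖proj (I j) sstar‖ ≤ 1 / u * u * Δ j := this
        _ = Δ j := by rw [one_div, inv_mul_cancel₀ hu0.ne', one_mul]
  · -- alternative (ii)
    right
    have hlt : 1 / u < tstar := lt_of_le_of_ne htstar_ge (Ne.symm hcase)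
    obtain ⟨phat, -, hphat⟩ :=
      Finset.exists_mem_eq_sup' (h𝒢ne.mono (Finset.subset_univ 𝒢)) tf
    have hpt : tstar = tf phat := htstar ▸ hphat
    have hpG : phat ∉ 𝒢 := by
      intro h
      rw [htf phat, if_pos h] at hpt
      exact hcase hpt
    have hpt2 : tstar = ‖proj (I phat \ IG) s‖ /
        Real.sqrt (u ^ 2 * Δ phat ^ 2 - ‖proj (I phat ∩ IG) s‖ ^ 2) := by
      rw [htf phat, if_neg hpG] at hpt
      rcases max_choice (1 / u) (‖proj (I phat \ IG) s‖ /
          Real.sqrt (u ^ 2 * Δ phat ^ 2 - ‖proj (I phat ∩ IG) s‖ ^ 2)) with h | h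
      · rw [h] at hpt; exact absurd hpt hcase
      · rw [h] at hpt; exact hpt
    have hDp := hD phat hpG
    have hsqp : 0 < Real.sqrt (u ^ 2 * Δ phat ^ 2 - ‖proj (I phat ∩ IG) s‖ ^ 2) :=
      Real.sqrt_pos.mpr hDp
    have hBp : ‖proj (I phat \ IG) s‖ =
        tstar * Real.sqrt (u ^ 2 * Δ phat ^ 2 - ‖proj (I phat ∩ IG) s‖ ^ 2) := by
      rw [hpt2, div_mul_cancel₀ _ hsqp.ne']
    have hBp2 : ‖proj (I phat \ IG) s‖ ^ 2
        = tstar ^ 2 * (u ^ 2 * Δ phat ^ 2 - ‖proj (I phat ∩ IG) s‖ ^ 2) := by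
      rw [hBp, mul_pow, Real.sq_sqrt hDp.le]
    have hpnorm : ‖proj (I phat) sstar‖ = tstar * u * Δ phat := by
      refine sq_eq_norm_aux (norm_nonneg _)
        (mul_nonneg (mul_nonneg ht0.le hu0.le) (hΔ phat).le) ?_
      rw [hkey phat, hBp2]
      ring
    refine ⟨phat, hpG, ?_, ?_⟩
    · intro i hi
      rw [hG_norm i hi, hpnorm]
      rw [mul_div_assoc, mul_div_assoc, div_self (hΔ i).ne', div_self (hΔ phat).ne']
    · intro j hj _
      rw [hpnorm, mul_div_assoc, div_self (hΔ phat).ne', mul_one, div_le_iff₀ (hΔ j)]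
      exact hbound j hj
end

section
/- (Strict growth of the shrinking set.) Suppose s ∉ 𝒮(Δ), the shrinking set 𝒢 is nonempty and proper, v_i(s) = u for all i ∈ 𝒢, and v_i(s) > v_j(s) for all i ∈ 𝒢 and j ∉ 𝒢. If the output s_* still satisfies s_* ∉ 𝒮(Δ), then there exists p̂ ∉ 𝒢 such that 𝒢 ∪ {p̂} ⊆ {i ∈ {1,…,q} : v_i(s_*) = max_{1≤j≤q} v_j(s_*)}; in particular, the set of indices attaining the maximal violation ratio at s_* strictly contains 𝒢. -/
lemma norm_proj_sq {n : ℕ} (J : Finset (Fin n)) (x : EuclideanSpace ℝ (Fin n)) :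
    ‖proj J x‖ ^ 2 = ∑ k ∈ J, (x k) ^ 2 := by
  rw [EuclideanSpace.norm_eq, Real.sq_sqrt (by positivity)]
  have h : ∀ k, ‖proj J x k‖ ^ 2 = if k ∈ J then (x k) ^ 2 else 0 := by
    intro k
    simp only [proj, Real.norm_eq_abs, sq_abs]
    split <;> simp
  rw [Finset.sum_congr rfl fun k _ => h k, Finset.sum_ite_mem, Finset.univ_inter]

/-- Strict growth of the shrinking set: if the output `s_*` of SHRINK is still
outside the structured trust region, then `𝒢 ∪ {p̂}` is contained in the set of
indices attaining the maximal violation ratio at `s_*`, for some `p̂ ∉ 𝒢`; in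
particular that set strictly contains `𝒢`. -/
theorem shrink_set_grows {n q : ℕ} (I : Fin q → Finset (Fin n)) (Δ : Fin q → ℝ)
    (hΔ : ∀ i, 0 < Δ i) (s : EuclideanSpace ℝ (Fin n)) (u : ℝ)
    (𝒢 : Finset (Fin q)) (h𝒢ne : 𝒢.Nonempty) (h𝒢pr : 𝒢 ≠ Finset.univ)
    (hsout : ¬ (∀ i, ‖proj (I i) s‖ ≤ Δ i))
    (hvG : ∀ i ∈ 𝒢, ‖proj (I i) s‖ / Δ i = u)
    (hvlt : ∀ i ∈ 𝒢, ∀ j ∉ 𝒢, ‖proj (I j) s‖ / Δ j < ‖proj (I i) s‖ / Δ i)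
    (IG : Finset (Fin n)) (hIG : IG = 𝒢.biUnion I)
    (tf : Fin q → ℝ)
    (htf : ∀ i, tf i = if i ∈ 𝒢 then 1 / u
      else max (1 / u)
        (‖proj (I i \ IG) s‖ / Real.sqrt (u ^ 2 * Δ i ^ 2 - ‖proj (I i ∩ IG) s‖ ^ 2)))
    (tstar : ℝ)
    (htstar : tstar = Finset.univ.sup' (h𝒢ne.mono (Finset.subset_univ 𝒢)) tf)
    (sstar : EuclideanSpace ℝ (Fin n))
    (hsstar : sstar = s + (tstar - 1) • proj IG s)
    (hstarout : ¬ (∀ i, ‖proj (I i) sstar‖ ≤ Δ i)) :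
    ∃ phat, phat ∉ 𝒢 ∧
      (∀ i ∈ insert phat 𝒢, ‖proj (I i) sstar‖ / Δ i
        = Finset.univ.sup' (h𝒢ne.mono (Finset.subset_univ 𝒢))
            (fun j => ‖proj (I j) sstar‖ / Δ j)) ∧
      (↑𝒢 : Set (Fin q)) ⊂ {i | ‖proj (I i) sstar‖ / Δ i
        = Finset.univ.sup' (h𝒢ne.mono (Finset.subset_univ 𝒢))
            (fun j => ‖proj (I j) sstar‖ / Δ j)} := by
  classical
  push_neg at hsout hstarout
  obtain ⟨g, hg⟩ := id h𝒢ne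
  -- u > 1
  have hu1 : 1 < u := by
    obtain ⟨i₀, hi₀⟩ := hsout
    have h1 : 1 < ‖proj (I i₀) s‖ / Δ i₀ := (one_lt_div (hΔ i₀)).2 hi₀
    by_cases hmem : i₀ ∈ 𝒢
    · rw [hvG i₀ hmem] at h1; exact h1
    · have h2 := hvlt g hg i₀ hmem
      rw [hvG g hg] at h2
      linarith
  have hu0 : 0 < u := by linarith
  have htfG : ∀ i ∈ 𝒢, tf i = 1 / u := fun i hi => by rw [htf i, if_pos hi]
  have hts_ge : 1 / u ≤ tstar := by
    rw [htstar]
    calc 1 / u = tf g := (htfG g hg).symm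
      _ ≤ _ := Finset.le_sup' tf (Finset.mem_univ g)
  have hts0 : 0 < tstar := lt_of_lt_of_le (by positivity) hts_ge
  -- split sums
  set A : Fin q → ℝ := fun j => ∑ k ∈ I j ∩ IG, (s k) ^ 2 with hAdef
  set B : Fin q → ℝ := fun j => ∑ k ∈ I j \ IG, (s k) ^ 2 with hBdef
  have hA0 : ∀ j, 0 ≤ A j := fun j => Finset.sum_nonneg fun k _ => sq_nonneg _
  have hB0 : ∀ j, 0 ≤ B j := fun j => Finset.sum_nonneg fun k _ => sq_nonneg _
  have hAB : ∀ j, ‖proj (I j) s‖ ^ 2 = A j + B j := by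
    intro j
    rw [norm_proj_sq]
    exact (Finset.sum_inter_add_sum_sdiff _ _ _).symm
  have hAs : ∀ j, ‖proj (I j ∩ IG) s‖ ^ 2 = A j := fun j => norm_proj_sq _ _
  have hBs : ∀ j, ‖proj (I j \ IG) s‖ ^ 2 = B j := fun j => norm_proj_sq _ _
  -- coordinates of sstar
  have hsk : ∀ k, sstar k = if k ∈ IG then tstar * s k else s k := by
    intro k
    rw [hsstar]
    show s k + (tstar - 1) * (proj IG s k) = _
    simp only [proj]
    by_cases hk : k ∈ IG <;> simp [hk] <;> ring
  have hstar_sq : ∀ j, ‖proj (I j) sstar‖ ^ 2 = tstar ^ 2 * A j + B j := by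
    intro j
    rw [norm_proj_sq, ← Finset.sum_inter_add_sum_sdiff (I j) IG (fun k => (sstar k) ^ 2)]
    congr 1
    · rw [hAdef, Finset.mul_sum]
      refine Finset.sum_congr rfl fun k hk => ?_
      rw [hsk k, if_pos (Finset.mem_inter.mp hk).2]; ring
    · refine Finset.sum_congr rfl fun k hk => ?_
      rw [hsk k, if_neg (Finset.mem_sdiff.mp hk).2]
  -- members of 𝒢
  have hGsub : ∀ i ∈ 𝒢, I i ⊆ IG := fun i hi => hIG ▸ Finset.subset_biUnion_of_mem I hi
  have hBG : ∀ i ∈ 𝒢, B i = 0 := by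
    intro i hi
    rw [hBdef]
    simp [Finset.sdiff_eq_empty_iff_subset.mpr (hGsub i hi)]
  have hnormG : ∀ i ∈ 𝒢, ‖proj (I i) s‖ = u * Δ i := by
    intro i hi
    have h := hvG i hi
    rw [div_eq_iff (ne_of_gt (hΔ i))] at h
    rw [h]
  have hstarG : ∀ i ∈ 𝒢, ‖proj (I i) sstar‖ = tstar * u * Δ i := by
    intro i hi
    have hAi : A i = (u * Δ i) ^ 2 := by
      have h1 := hAB i
      rw [hBG i hi, hnormG i hi] at h1
      linarith
    have h1 : ‖proj (I i) sstar‖ ^ 2 = (tstar * u * Δ i) ^ 2 := by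
      rw [hstar_sq i, hBG i hi, hAi]; ring
    have h2 : (0:ℝ) ≤ tstar * u * Δ i := (mul_pos (mul_pos hts0 hu0) (hΔ i)).le
    rw [← Real.sqrt_sq (norm_nonneg _), h1, Real.sqrt_sq h2]
  -- denominator positivity for j ∉ 𝒢
  have hden : ∀ j ∉ 𝒢, A j + B j < u ^ 2 * Δ j ^ 2 := by
    intro j hj
    have hv := hvlt g hg j hj
    rw [hvG g hg] at hv
    have h1 : ‖proj (I j) s‖ < u * Δ j := (div_lt_iff₀ (hΔ j)).1 hv
    nlinarith [hAB j, norm_nonneg (proj (I j) s), hΔ j]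
  -- key inequality
  have hkey : ∀ j ∉ 𝒢, B j ≤ tstar ^ 2 * (u ^ 2 * Δ j ^ 2 - A j) := by
    intro j hj
    have htj : tf j ≤ tstar := htstar ▸ Finset.le_sup' tf (Finset.mem_univ j)
    rw [htf j, if_neg hj, hAs j] at htj
    have h2 := le_trans (le_max_right _ _) htj
    have hpos : 0 < u ^ 2 * Δ j ^ 2 - A j := by
      have := hden j hj; have := hB0 j; linarith
    have hsq : 0 < Real.sqrt (u ^ 2 * Δ j ^ 2 - A j) := Real.sqrt_pos.2 hpos
    rw [div_le_iff₀ hsq] at h2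
    have h3 : ‖proj (I j \ IG) s‖ ^ 2 ≤ (tstar * Real.sqrt (u ^ 2 * Δ j ^ 2 - A j)) ^ 2 :=
      pow_le_pow_left₀ (norm_nonneg _) h2 2
    rw [hBs j, mul_pow, Real.sq_sqrt hpos.le] at h3
    exact h3
  -- uniform bound
  have hbound : ∀ j, ‖proj (I j) sstar‖ ≤ tstar * u * Δ j := by
    intro j
    by_cases hj : j ∈ 𝒢
    · exact (hstarG j hj).le
    · have h1 : ‖proj (I j) sstar‖ ^ 2 ≤ (tstar * u * Δ j) ^ 2 := by
        rw [hstar_sq j]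
        nlinarith [hkey j hj, hA0 j]
      calc ‖proj (I j) sstar‖ = Real.sqrt (‖proj (I j) sstar‖ ^ 2) :=
            (Real.sqrt_sq (norm_nonneg _)).symm
        _ ≤ Real.sqrt ((tstar * u * Δ j) ^ 2) := Real.sqrt_le_sqrt h1
        _ = tstar * u * Δ j := Real.sqrt_sq (mul_pos (mul_pos hts0 hu0) (hΔ j)).le
  -- tstar > 1/u
  have htgt : 1 / u < tstar := by
    rcases lt_or_ge (1 / u) tstar with h | h
    · exact h
    · exfalso
      have hts : tstar = 1 / u := le_antisymm h hts_ge
      obtain ⟨j, hj⟩ := hstarout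
      have hb := hbound j
      rw [hts] at hb
      have heq : 1 / u * u * Δ j = Δ j := by field_simp
      rw [heq] at hb
      linarith
  -- the maximizer p
  obtain ⟨p, -, hp⟩ := Finset.exists_mem_eq_sup' (h𝒢ne.mono (Finset.subset_univ 𝒢)) tf
  have hpt : tf p = tstar := by rw [htstar, hp]
  have hpG : p ∉ 𝒢 := by
    intro h
    rw [htfG p h] at hpt
    rw [← hpt] at htgt
    exact lt_irrefl _ htgt
  have hposP : 0 < u ^ 2 * Δ p ^ 2 - A p := by
    have := hden p hpG; have := hB0 p; linarith
  have hb2 : tstar = ‖proj (I p \ IG) s‖ / Real.sqrt (u ^ 2 * Δ p ^ 2 - A p) := by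
    rw [← hpt, htf p, if_neg hpG, hAs p]
    rcases max_choice (1 / u)
        (‖proj (I p \ IG) s‖ / Real.sqrt (u ^ 2 * Δ p ^ 2 - A p)) with h | h
    · exfalso
      rw [htf p, if_neg hpG, hAs p, h] at hpt
      rw [← hpt] at htgt
      exact lt_irrefl _ htgt
    · exact h
  have hstarP : ‖proj (I p) sstar‖ = tstar * u * Δ p := by
    have hsq : 0 < Real.sqrt (u ^ 2 * Δ p ^ 2 - A p) := Real.sqrt_pos.2 hposP
    have hb3 : ‖proj (I p \ IG) s‖ = tstar * Real.sqrt (u ^ 2 * Δ p ^ 2 - A p) := by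
      rw [hb2]
      field_simp
    have hBp : B p = tstar ^ 2 * (u ^ 2 * Δ p ^ 2 - A p) := by
      have := congrArg (· ^ 2) hb3
      simp only [mul_pow, Real.sq_sqrt hposP.le, hBs p] at this
      exact this
    have h1 : ‖proj (I p) sstar‖ ^ 2 = (tstar * u * Δ p) ^ 2 := by
      rw [hstar_sq p, hBp]; ring
    rw [← Real.sqrt_sq (norm_nonneg _), h1, Real.sqrt_sq (mul_pos (mul_pos hts0 hu0) (hΔ p)).le]
  -- the maximal ratio equals tstar * u
  have hvEq : ∀ i ∈ insert p 𝒢, ‖proj (I i) sstar‖ / Δ i = tstar * u := by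
    intro i hi
    have hnorm : ‖proj (I i) sstar‖ = tstar * u * Δ i := by
      rcases Finset.mem_insert.mp hi with h | h
      · subst h; exact hstarP
      · exact hstarG i h
    rw [hnorm, mul_div_assoc, div_self (ne_of_gt (hΔ i)), mul_one]
  set M := Finset.univ.sup' (h𝒢ne.mono (Finset.subset_univ 𝒢))
      (fun j => ‖proj (I j) sstar‖ / Δ j) with hM
  have hMle : M ≤ tstar * u := by
    refine Finset.sup'_le _ _ fun j _ => ?_
    exact (div_le_iff₀ (hΔ j)).2 (hbound j)
  have hMge : tstar * u ≤ M := by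
    calc tstar * u = ‖proj (I g) sstar‖ / Δ g :=
          (hvEq g (Finset.mem_insert_of_mem hg)).symm
      _ ≤ M := by rw [hM]; exact Finset.le_sup' (fun j => ‖proj (I j) sstar‖ / Δ j) (Finset.mem_univ g)
  have hMeq : M = tstar * u := le_antisymm hMle hMge
  refine ⟨p, hpG, fun i hi => by rw [hMeq]; exact hvEq i hi, ?_⟩
  have hsub : (↑𝒢 : Set (Fin q)) ⊆ {i | ‖proj (I i) sstar‖ / Δ i = M} := by
    intro i hi
    simp only [Set.mem_setOf_eq, hMeq]
    exact hvEq i (Finset.mem_insert_of_mem hi)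
  refine (Set.ssubset_iff_of_subset hsub).2 ⟨p, ?_, by simpa using hpG⟩
  simp only [Set.mem_setOf_eq, hMeq]
  exact hvEq p (Finset.mem_insert_self p 𝒢)
end

section
/- (Circumscribed ball of the structured trust region.) Assume q ≥ 1 and that every coordinate index j ∈ {1,…,n} belongs to at least one element index set 𝓘_i. Then 𝒮(Δ) is contained in the closed Euclidean ball of radius √(min{n,q})·max_{1≤i≤q} Δ_i centered at the origin: every s ∈ ℝⁿ with ‖s^{𝓘_i}‖₂ ≤ Δ_i for all i satisfies ‖s‖₂ ≤ √(min{n,q})·max_{1≤i≤q} Δ_i. -/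
/-- Circumscribed ball: if every coordinate belongs to some element index set, the
structured trust region `𝒮(Δ)` is contained in the closed Euclidean ball of
radius `√(min{n,q})·max_i Δ_i` centered at the origin. -/
theorem subset_circumscribed_ball {n q : ℕ} (hq : 0 < q)
    (I : Fin q → Finset (Fin n)) (Δ : Fin q → ℝ) (hΔ : ∀ i, 0 < Δ i)
    (hcover : ∀ j : Fin n, ∃ i, j ∈ I i)
    (s : EuclideanSpace ℝ (Fin n)) (hs : ∀ i, ‖proj (I i) s‖ ≤ Δ i) :
    ‖s‖ ≤ Real.sqrt (min (n : ℝ) (q : ℝ)) *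
      Finset.univ.sup' (Finset.univ_nonempty_iff.mpr ⟨⟨0, hq⟩⟩) Δ := by
  set M := Finset.univ.sup' (Finset.univ_nonempty_iff.mpr ⟨⟨0, hq⟩⟩) Δ with hMdef
  have hΔleM : ∀ i, Δ i ≤ M := fun i => Finset.le_sup' Δ (Finset.mem_univ i)
  have hM0 : 0 ≤ M := le_trans (hΔ ⟨0, hq⟩).le (hΔleM ⟨0, hq⟩)
  -- the sum of squares over each index set is at most Δ i ^ 2
  have hprojsum : ∀ i, ∑ j ∈ I i, (s j) ^ 2 ≤ (Δ i) ^ 2 := by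
    intro i
    have h1 : ‖proj (I i) s‖ ^ 2 = ∑ j ∈ I i, (s j) ^ 2 := by
      rw [EuclideanSpace.norm_eq, Real.sq_sqrt (by positivity)]
      rw [← Finset.sum_filter_add_sum_filter_not Finset.univ (· ∈ I i)]
      have h2 : ∑ j ∈ Finset.univ.filter (fun j => ¬ j ∈ I i),
          ‖proj (I i) s j‖ ^ 2 = 0 := by
        apply Finset.sum_eq_zero
        intro j hj
        simp only [Finset.mem_filter] at hj
        simp [proj, hj.2]
      rw [h2, add_zero]
      rw [Finset.sum_filter]
      rw [Finset.sum_ite_mem, Finset.univ_inter]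
      apply Finset.sum_congr rfl
      intro j hj
      simp [proj, hj, sq_abs]
    calc ∑ j ∈ I i, (s j) ^ 2 = ‖proj (I i) s‖ ^ 2 := h1.symm
      _ ≤ (Δ i) ^ 2 := pow_le_pow_left₀ (norm_nonneg _) (hs i) 2
  -- each coordinate squared is at most M ^ 2
  have hcoordsq : ∀ j, (s j) ^ 2 ≤ M ^ 2 := by
    intro j
    obtain ⟨i, hi⟩ := hcover j
    calc (s j) ^ 2 ≤ ∑ j' ∈ I i, (s j') ^ 2 :=
          Finset.single_le_sum (f := fun j' => (s j') ^ 2) (fun j' _ => sq_nonneg _) hi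
      _ ≤ (Δ i) ^ 2 := hprojsum i
      _ ≤ M ^ 2 := pow_le_pow_left₀ (hΔ i).le (hΔleM i) 2
  -- n-bound
  have hbn : ∑ j : Fin n, (s j) ^ 2 ≤ (n : ℝ) * M ^ 2 := by
    calc ∑ j : Fin n, (s j) ^ 2 ≤ ∑ _j : Fin n, M ^ 2 :=
          Finset.sum_le_sum (fun j _ => hcoordsq j)
      _ = (n : ℝ) * M ^ 2 := by simp [Finset.sum_const, mul_comm]
  -- q-bound via a choice of covering index for each coordinate
  have hbq : ∑ j : Fin n, (s j) ^ 2 ≤ (q : ℝ) * M ^ 2 := by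
    choose f hf using hcover
    calc ∑ j : Fin n, (s j) ^ 2
        = ∑ i : Fin q, ∑ j ∈ Finset.univ.filter (fun j => f j = i), (s j) ^ 2 :=
          (Finset.sum_fiberwise _ f _).symm
      _ ≤ ∑ i : Fin q, (Δ i) ^ 2 := by
          apply Finset.sum_le_sum
          intro i _
          refine le_trans ?_ (hprojsum i)
          apply Finset.sum_le_sum_of_subset_of_nonneg
          · intro j hj
            simp only [Finset.mem_filter] at hj
            rw [← hj.2]; exact hf j
          · intro j _ _; exact sq_nonneg _
      _ ≤ ∑ _i : Fin q, M ^ 2 := Finset.sum_le_sum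
            (fun i _ => pow_le_pow_left₀ (hΔ i).le (hΔleM i) 2)
      _ = (q : ℝ) * M ^ 2 := by simp [Finset.sum_const, mul_comm]
  have hmin : ∑ j : Fin n, (s j) ^ 2 ≤ min (n : ℝ) (q : ℝ) * M ^ 2 := by
    rcases le_total (n : ℝ) (q : ℝ) with h | h
    · rw [min_eq_left h]; exact hbn
    · rw [min_eq_right h]; exact hbq
  have hnorm : ‖s‖ = Real.sqrt (∑ j : Fin n, (s j) ^ 2) := by
    rw [EuclideanSpace.norm_eq]
    congr 1
    exact Finset.sum_congr rfl (fun j _ => by rw [Real.norm_eq_abs, sq_abs])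
  rw [hnorm]
  calc Real.sqrt (∑ j : Fin n, (s j) ^ 2)
      ≤ Real.sqrt (min (n : ℝ) (q : ℝ) * M ^ 2) := Real.sqrt_le_sqrt hmin
    _ = Real.sqrt (min (n : ℝ) (q : ℝ)) * M := by
        rw [Real.sqrt_mul (le_min (Nat.cast_nonneg n) (Nat.cast_nonneg q)),
          Real.sqrt_sq hM0]
end
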